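/- The distinguishing number of the random graph (Rado graph) is 2. -/

import Mathlib

/-- A coloring `c` of the vertices with `r` labels is distinguishing for the graph `G`
if the only automorphism of `G` preserving the labels is the identity. -/
def SimpleGraph.IsDistinguishing {V : Type} (G : SimpleGraph V) (r : ℕ) (c : V → Fin r) : Prop :=
  ∀ φ : G ≃g G, (∀ v, c (φ v) = c v) → ∀ v, φ v = v

/-- The distinguishing number of a graph: the least `r` admitting a distinguishing
labeling with `r` labels. -/
noncomputable def SimpleGraph.distinguishingNumber {V : Type} (G : SimpleGraph V) : ℕ :=
  sInf {r : ℕ | ∃ c : V → Fin r, G.IsDistinguishing r c}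

/-- `G` is the Rado (random) graph: a countably infinite graph with the extension
property. -/
def IsRadoGraph {V : Type} (G : SimpleGraph V) : Prop :=
  Countable V ∧ Infinite V ∧
    ∀ A B : Finset V, Disjoint A B →
      ∃ v, v ∉ A ∧ v ∉ B ∧ (∀ a ∈ A, G.Adj v a) ∧ ∀ b ∈ B, ¬ G.Adj v b

namespace RadoAux
open scoped Classical

variable {V : Type}

/-- The extension property. -/
def ExtProp (G : SimpleGraph V) : Prop :=
  ∀ A B : Finset V, Disjoint A B →
    ∃ v, v ∉ A ∧ v ∉ B ∧ (∀ a ∈ A, G.Adj v a) ∧ ∀ b ∈ B, ¬ G.Adj v b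

noncomputable def pickExt (G : SimpleGraph V) (A B : Finset V) (d : V) : V :=
  if h : ∃ v, v ∉ A ∧ v ∉ B ∧ (∀ a ∈ A, G.Adj v a) ∧ ∀ b ∈ B, ¬ G.Adj v b
  then h.choose else d

lemma pickExt_spec {G : SimpleGraph V} (hext : ExtProp G) {A B : Finset V}
    (hd : Disjoint A B) (d : V) :
    pickExt G A B d ∉ A ∧ pickExt G A B d ∉ B ∧
      (∀ a ∈ A, G.Adj (pickExt G A B d) a) ∧ ∀ b ∈ B, ¬ G.Adj (pickExt G A B d) b := by
  have h := hext A B hd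
  rw [pickExt, dif_pos h]
  exact h.choose_spec

noncomputable def rayA (G : SimpleGraph V) (p : ℕ → V × V) (rn : V) (Rn : Finset V) (n : ℕ) :
    Finset V :=
  if (p n).1 ∉ Rn ∧ (p n).2 ∉ Rn ∧ (p n).1 ≠ (p n).2 then {rn, (p n).1} else {rn}

noncomputable def rayB (G : SimpleGraph V) (p : ℕ → V × V) (rn : V) (Rn : Finset V) (n : ℕ) :
    Finset V :=
  (Rn.erase rn) ∪ (if (p n).1 ∉ Rn ∧ (p n).2 ∉ Rn ∧ (p n).1 ≠ (p n).2 then {(p n).2} else ∅)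

noncomputable def rayData (G : SimpleGraph V) (p : ℕ → V × V) (v0 : V) : ℕ → V × Finset V
  | 0 => (v0, {v0})
  | n + 1 =>
    let d := rayData G p v0 n
    let v := pickExt G (rayA G p d.1 d.2 n) (rayB G p d.1 d.2 n) v0
    (v, insert v d.2)

noncomputable def ray (G : SimpleGraph V) (p : ℕ → V × V) (v0 : V) (n : ℕ) : V :=
  (rayData G p v0 n).1

noncomputable def rayR (G : SimpleGraph V) (p : ℕ → V × V) (v0 : V) (n : ℕ) : Finset V :=
  (rayData G p v0 n).2

lemma ray_succ (G : SimpleGraph V) (p : ℕ → V × V) (v0 : V) (n : ℕ) :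
    ray G p v0 (n + 1) =
      pickExt G (rayA G p (ray G p v0 n) (rayR G p v0 n) n)
        (rayB G p (ray G p v0 n) (rayR G p v0 n) n) v0 := by
  rfl

lemma rayR_succ (G : SimpleGraph V) (p : ℕ → V × V) (v0 : V) (n : ℕ) :
    rayR G p v0 (n + 1) = insert (ray G p v0 (n + 1)) (rayR G p v0 n) := by
  rfl

lemma ray_mem (G : SimpleGraph V) (p : ℕ → V × V) (v0 : V) :
    ∀ n, ray G p v0 n ∈ rayR G p v0 n
  | 0 => by simp [ray, rayR, rayData]
  | n + 1 => by rw [rayR_succ]; exact Finset.mem_insert_self _ _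

lemma ray_mem_A (G : SimpleGraph V) (p : ℕ → V × V) (rn : V) (Rn : Finset V) (n : ℕ) :
    rn ∈ rayA G p rn Rn n := by
  rw [rayA]; split <;> simp

lemma ray_disj (G : SimpleGraph V) (p : ℕ → V × V) (v0 : V) (n : ℕ) :
    Disjoint (rayA G p (ray G p v0 n) (rayR G p v0 n) n)
      (rayB G p (ray G p v0 n) (rayR G p v0 n) n) := by
  set rn := ray G p v0 n with hrn
  set Rn := rayR G p v0 n with hRn
  rw [Finset.disjoint_left]
  intro a ha hb
  rw [rayA] at ha; rw [rayB] at hb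
  by_cases hc : (p n).1 ∉ Rn ∧ (p n).2 ∉ Rn ∧ (p n).1 ≠ (p n).2
  · rw [if_pos hc] at ha hb
    obtain ⟨h1, h2, h3⟩ := hc
    simp only [Finset.mem_insert, Finset.mem_singleton, Finset.mem_union,
      Finset.mem_erase] at ha hb
    rcases ha with rfl | rfl
    · rcases hb with ⟨hne, _⟩ | heq
      · exact hne rfl
      · exact h2 (heq ▸ ray_mem G p v0 n)
    · rcases hb with ⟨_, hmem⟩ | heq
      · exact h1 hmem
      · exact h3 heq
  · rw [if_neg hc] at ha hb
    simp only [Finset.mem_singleton, Finset.union_empty, Finset.mem_erase] at ha hb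
    exact hb.1 ha

lemma ray_not_mem (G : SimpleGraph V) {p : ℕ → V × V} {v0 : V} (hext : ExtProp G) (n : ℕ) :
    ray G p v0 (n + 1) ∉ rayR G p v0 n := by
  have hspec := pickExt_spec hext (ray_disj G p v0 n) v0
  rw [← ray_succ] at hspec
  intro hmem
  have hne : ray G p v0 (n + 1) ≠ ray G p v0 n := by
    intro h
    exact hspec.1 (h ▸ ray_mem_A G p _ _ n)
  exact hspec.2.1 (Finset.mem_union_left _ (Finset.mem_erase.2 ⟨hne, hmem⟩))

lemma ray_inv {G : SimpleGraph V} (hext : ExtProp G) (p : ℕ → V × V) (v0 : V) : ∀ n : ℕ,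
    (rayR G p v0 n = (Finset.range (n + 1)).image (ray G p v0)) ∧
    ∀ i j, i < j → j ≤ n → ray G p v0 i ≠ ray G p v0 j ∧
      (G.Adj (ray G p v0 i) (ray G p v0 j) ↔ j = i + 1) := by
  intro n
  induction n with
  | zero =>
    constructor
    · simp [rayR, rayData, ray]
    · intro i j hij hj; omega
  | succ n ih =>
    obtain ⟨hR, hP⟩ := ih
    have hspec := pickExt_spec hext (ray_disj G p v0 n) v0
    rw [← ray_succ] at hspec
    have hmemR : ∀ i, i ≤ n → ray G p v0 i ∈ rayR G p v0 n := by
      intro i hi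
      rw [hR]
      exact Finset.mem_image_of_mem _ (Finset.mem_range.2 (by omega))
    have hnotR := ray_not_mem G hext (p := p) (v0 := v0) n
    refine ⟨?_, ?_⟩
    · rw [rayR_succ, hR,
        show Finset.range (n + 1 + 1) = insert (n + 1) (Finset.range (n + 1)) from
          Finset.range_add_one,
        Finset.image_insert]
    · intro i j hij hj
      rcases Nat.lt_succ_iff_lt_or_eq.1 (Nat.lt_succ_of_le hj) with hj' | rfl
      · exact hP i j hij (by omega)
      · have hi : i ≤ n := by omega
        have hne : ray G p v0 i ≠ ray G p v0 (n + 1) := by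
          intro h
          exact hnotR (h ▸ hmemR i hi)
        refine ⟨hne, ?_⟩
        rcases Nat.lt_succ_iff_lt_or_eq.1 hij with hlt | rfl
        · have hiB : ray G p v0 i ∈ rayB G p (ray G p v0 n) (rayR G p v0 n) n := by
            apply Finset.mem_union_left
            exact Finset.mem_erase.2 ⟨(hP i n hlt le_rfl).1, hmemR i (by omega)⟩
          have := hspec.2.2.2 _ hiB
          constructor
          · intro h; exact absurd (G.adj_symm h) this
          · intro h; omega
        · have := hspec.2.2.1 _ (ray_mem_A G p (ray G p v0 i) (rayR G p v0 i) i)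
          simp [G.adj_symm this]

lemma ray_pair {G : SimpleGraph V} (hext : ExtProp G) (p : ℕ → V × V) (v0 : V)
    {i j : ℕ} (hij : i < j) :
    ray G p v0 i ≠ ray G p v0 j ∧ (G.Adj (ray G p v0 i) (ray G p v0 j) ↔ j = i + 1) :=
  (ray_inv hext p v0 j).2 i j hij le_rfl

lemma ray_injective {G : SimpleGraph V} (hext : ExtProp G) (p : ℕ → V × V) (v0 : V) :
    Function.Injective (ray G p v0) := by
  intro i j h
  rcases lt_trichotomy i j with h' | h' | h'
  · exact absurd h (ray_pair hext p v0 h').1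
  · exact h'
  · exact absurd h.symm (ray_pair hext p v0 h').1

lemma ray_adj_succ {G : SimpleGraph V} (hext : ExtProp G) (p : ℕ → V × V) (v0 : V) (n : ℕ) :
    G.Adj (ray G p v0 n) (ray G p v0 (n + 1)) :=
  (ray_pair hext p v0 (Nat.lt_succ_self n)).2.mpr rfl

lemma ray_adj_cases {G : SimpleGraph V} (hext : ExtProp G) (p : ℕ → V × V) (v0 : V)
    {i j : ℕ} (h : G.Adj (ray G p v0 i) (ray G p v0 j)) : j = i + 1 ∨ i = j + 1 := by
  rcases lt_trichotomy i j with h' | h' | h'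
  · exact Or.inl ((ray_pair hext p v0 h').2.mp h)
  · exact absurd (h' ▸ h) (G.irrefl)
  · exact Or.inr ((ray_pair hext p v0 h').2.mp (G.adj_symm h))

lemma ray_sep {G : SimpleGraph V} (hext : ExtProp G) (p : ℕ → V × V) (v0 : V)
    {u w : V} (hu : u ∉ Set.range (ray G p v0)) (hw : w ∉ Set.range (ray G p v0))
    (huw : u ≠ w) {n : ℕ} (hp : p n = (u, w)) :
    G.Adj (ray G p v0 (n + 1)) u ∧ ¬ G.Adj (ray G p v0 (n + 1)) w := by
  have hspec := pickExt_spec hext (ray_disj G p v0 n) v0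
  rw [← ray_succ] at hspec
  have hRn : ∀ x, x ∉ Set.range (ray G p v0) → x ∉ rayR G p v0 n := by
    intro x hx hmem
    rw [(ray_inv hext p v0 n).1] at hmem
    obtain ⟨m, _, rfl⟩ := Finset.mem_image.1 hmem
    exact hx ⟨m, rfl⟩
  have hcond : (p n).1 ∉ rayR G p v0 n ∧ (p n).2 ∉ rayR G p v0 n ∧ (p n).1 ≠ (p n).2 := by
    rw [hp]; exact ⟨hRn u hu, hRn w hw, huw⟩
  constructor
  · apply hspec.2.2.1
    rw [rayA, if_pos hcond, hp]
    simp
  · apply hspec.2.2.2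
    rw [rayB, if_pos hcond, hp]
    simp

lemma exists_distinguishing (G : SimpleGraph V) (hext : ExtProp G)
    [Countable V] [Infinite V] : ∃ c : V → Fin 2, G.IsDistinguishing 2 c := by
  obtain ⟨p, hp⟩ := exists_surjective_nat (V × V)
  obtain ⟨v0⟩ := (inferInstance : Nonempty V)
  set S : Set V := Set.range (ray G p v0) with hS
  refine ⟨fun v => if v ∈ S then 0 else 1, ?_⟩
  intro φ hc
  have key : ∀ x, φ x ∈ S ↔ x ∈ S := by
    intro x
    have h := hc x
    simp only [] at h
    by_cases hx : x ∈ S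
    · rw [if_pos hx] at h
      refine ⟨fun _ => hx, fun _ => ?_⟩
      by_contra hφ
      rw [if_neg hφ] at h
      exact absurd h (by decide)
    · rw [if_neg hx] at h
      refine ⟨fun hφ => ?_, fun hφ => absurd hφ hx⟩
      rw [if_pos hφ] at h
      exact absurd h (by decide)
  have keySymm : ∀ x, φ.symm x ∈ S ↔ x ∈ S := by
    intro x
    have := key (φ.symm x)
    rw [RelIso.apply_symm_apply] at this
    exact this.symm
  have hfix : ∀ n, φ (ray G p v0 n) = ray G p v0 n := by
    intro n
    induction n using Nat.strong_induction_on with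
    | _ n ih =>
      obtain ⟨m, hm⟩ := (key (ray G p v0 n)).2 ⟨n, rfl⟩
      match n with
      | 0 =>
        match m, hm with
        | 0, hm => exact hm.symm
        | (k+1), hm =>
          exfalso
          have hsymm : φ.symm (ray G p v0 (k + 1)) = ray G p v0 0 := by
            rw [hm, RelIso.symm_apply_apply]
          have hred : ∀ i, ∃ j, φ.symm (ray G p v0 i) = ray G p v0 j := by
            intro i
            obtain ⟨j, hj⟩ := (keySymm (ray G p v0 i)).2 ⟨i, rfl⟩
            exact ⟨j, hj.symm⟩
          have hadj : ∀ i, G.Adj (ray G p v0 i) (ray G p v0 (i+1)) →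
              G.Adj (φ.symm (ray G p v0 i)) (φ.symm (ray G p v0 (i+1))) := by
            intro i hi
            exact (RelIso.map_rel_iff φ.symm).mpr hi
          -- x := φ.symm (ray k) is a ray vertex adjacent to ray 0
          have hx : G.Adj (φ.symm (ray G p v0 k)) (ray G p v0 0) := by
            have := hadj k (ray_adj_succ hext p v0 k)
            rwa [hsymm] at this
          have hy : G.Adj (φ.symm (ray G p v0 (k+2))) (ray G p v0 0) := by
            have h2 : G.Adj (ray G p v0 (k+2)) (ray G p v0 (k+1)) :=
              G.adj_symm (ray_adj_succ hext p v0 (k+1))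
            have := (RelIso.map_rel_iff φ.symm).mpr h2
            rwa [hsymm] at this
          have hone : ∀ z, (∃ j, φ.symm z = ray G p v0 j) →
              G.Adj (φ.symm z) (ray G p v0 0) → φ.symm z = ray G p v0 1 := by
            rintro z ⟨j, hj⟩ hadjz
            rw [hj] at hadjz ⊢
            rcases ray_adj_cases hext p v0 hadjz with h' | h'
            · omega
            · rw [h']
          have e1 := hone (ray G p v0 k) (hred k) hx
          have e2 := hone (ray G p v0 (k+2)) (hred (k+2)) hy
          have : ray G p v0 k = ray G p v0 (k+2) := by
            have := e1.trans e2.symm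
            exact φ.symm.injective this
          have := ray_injective hext p v0 this
          omega
      | (k+1) =>
        have hk := ih k (by omega)
        have hadj : G.Adj (ray G p v0 k) (ray G p v0 m) := by
          have := (RelIso.map_rel_iff φ).mpr (ray_adj_succ hext p v0 k)
          rwa [hk, ← hm] at this
        rcases ray_adj_cases hext p v0 hadj with h' | h'
        · rw [← hm, h']
        · exfalso
          have hmlt : m < k + 1 := by omega
          have := ih m hmlt
          have heq : φ (ray G p v0 m) = φ (ray G p v0 (k+1)) := by rw [this]; exact hm
          have := ray_injective hext p v0 (φ.injective heq)
          omega
  intro v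
  by_cases hv : v ∈ S
  · obtain ⟨n, rfl⟩ := hv
    exact hfix n
  · by_contra hne
    have hφv : φ v ∉ S := fun h => hv ((key v).1 h)
    obtain ⟨n, hn⟩ := hp (v, φ v)
    obtain ⟨h1, h2⟩ := ray_sep hext p v0 hv hφv (fun h => hne h.symm) hn
    have := (RelIso.map_rel_iff φ).mpr h1
    rw [hfix (n+1)] at this
    exact h2 this

/-! ### Back-and-forth: a nontrivial automorphism -/

def BFR (G : SimpleGraph V) (q r : V × V) : Prop :=
  q.1 ≠ r.1 ∧ q.2 ≠ r.2 ∧ (G.Adj q.1 r.1 ↔ G.Adj q.2 r.2)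

lemma BFR_symm (G : SimpleGraph V) : Symmetric (BFR G) := by
  rintro q r ⟨h1, h2, h3⟩
  exact ⟨h1.symm, h2.symm, by rw [G.adj_comm r.1 q.1, G.adj_comm r.2 q.2]; exact h3⟩

noncomputable def pickY (G : SimpleGraph V) (l : List (V × V)) (x d : V) : V :=
  if h : ∃ y, (∀ q ∈ l, y ≠ q.2) ∧ ∀ q ∈ l, (G.Adj x q.1 ↔ G.Adj y q.2)
  then h.choose else d

noncomputable def pickX (G : SimpleGraph V) (l : List (V × V)) (y d : V) : V :=
  if h : ∃ x, (∀ q ∈ l, x ≠ q.1) ∧ ∀ q ∈ l, (G.Adj x q.1 ↔ G.Adj y q.2)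
  then h.choose else d

lemma pickY_spec {G : SimpleGraph V} (hext : ExtProp G) {l : List (V × V)}
    (hinv : l.Pairwise (BFR G)) (x d : V) :
    (∀ q ∈ l, pickY G l x d ≠ q.2) ∧ ∀ q ∈ l, (G.Adj x q.1 ↔ G.Adj (pickY G l x d) q.2) := by
  have h : ∃ y, (∀ q ∈ l, y ≠ q.2) ∧ ∀ q ∈ l, (G.Adj x q.1 ↔ G.Adj y q.2) := by
    set A : Finset V := (l.toFinset.filter fun q => G.Adj x q.1).image Prod.snd with hA
    set B : Finset V := (l.toFinset.filter fun q => ¬ G.Adj x q.1).image Prod.snd with hB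
    have hdisj : Disjoint A B := by
      rw [Finset.disjoint_left]
      rintro a ha hb
      obtain ⟨q, hq, rfl⟩ := Finset.mem_image.1 ha
      obtain ⟨q', hq', he⟩ := Finset.mem_image.1 hb
      rw [Finset.mem_filter, List.mem_toFinset] at hq hq'
      have hne : q' ≠ q := fun h => hq'.2 (h ▸ hq.2)
      exact ((haveI : Std.Symm (BFR G) := ⟨fun _ _ h => BFR_symm G h⟩; List.Pairwise.forall hinv) hq'.1 hq.1 hne).2.1 he
    obtain ⟨v, hvA, hvB, hadjA, hadjB⟩ := hext A B hdisj
    refine ⟨v, ?_, ?_⟩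
    · intro q hq
      by_cases hadj : G.Adj x q.1
      · intro h
        exact hvA (Finset.mem_image.2 ⟨q, Finset.mem_filter.2
          ⟨List.mem_toFinset.2 hq, hadj⟩, h.symm⟩)
      · intro h
        exact hvB (Finset.mem_image.2 ⟨q, Finset.mem_filter.2
          ⟨List.mem_toFinset.2 hq, hadj⟩, h.symm⟩)
    · intro q hq
      by_cases hadj : G.Adj x q.1
      · simp only [hadj, true_iff]
        exact hadjA _ (Finset.mem_image.2 ⟨q, Finset.mem_filter.2
          ⟨List.mem_toFinset.2 hq, hadj⟩, rfl⟩)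
      · simp only [hadj, false_iff]
        exact hadjB _ (Finset.mem_image.2 ⟨q, Finset.mem_filter.2
          ⟨List.mem_toFinset.2 hq, hadj⟩, rfl⟩)
  rw [pickY, dif_pos h]
  exact h.choose_spec

lemma pickX_spec {G : SimpleGraph V} (hext : ExtProp G) {l : List (V × V)}
    (hinv : l.Pairwise (BFR G)) (y d : V) :
    (∀ q ∈ l, pickX G l y d ≠ q.1) ∧ ∀ q ∈ l, (G.Adj (pickX G l y d) q.1 ↔ G.Adj y q.2) := by
  have h : ∃ x, (∀ q ∈ l, x ≠ q.1) ∧ ∀ q ∈ l, (G.Adj x q.1 ↔ G.Adj y q.2) := by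
    set A : Finset V := (l.toFinset.filter fun q => G.Adj y q.2).image Prod.fst with hA
    set B : Finset V := (l.toFinset.filter fun q => ¬ G.Adj y q.2).image Prod.fst with hB
    have hdisj : Disjoint A B := by
      rw [Finset.disjoint_left]
      rintro a ha hb
      obtain ⟨q, hq, rfl⟩ := Finset.mem_image.1 ha
      obtain ⟨q', hq', he⟩ := Finset.mem_image.1 hb
      rw [Finset.mem_filter, List.mem_toFinset] at hq hq'
      have hne : q' ≠ q := fun h => hq'.2 (h ▸ hq.2)
      exact ((haveI : Std.Symm (BFR G) := ⟨fun _ _ h => BFR_symm G h⟩; List.Pairwise.forall hinv) hq'.1 hq.1 hne).1 he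
    obtain ⟨v, hvA, hvB, hadjA, hadjB⟩ := hext A B hdisj
    refine ⟨v, ?_, ?_⟩
    · intro q hq
      by_cases hadj : G.Adj y q.2
      · intro h
        exact hvA (Finset.mem_image.2 ⟨q, Finset.mem_filter.2
          ⟨List.mem_toFinset.2 hq, hadj⟩, h.symm⟩)
      · intro h
        exact hvB (Finset.mem_image.2 ⟨q, Finset.mem_filter.2
          ⟨List.mem_toFinset.2 hq, hadj⟩, h.symm⟩)
    · intro q hq
      by_cases hadj : G.Adj y q.2
      · simp only [hadj, iff_true]
        exact hadjA _ (Finset.mem_image.2 ⟨q, Finset.mem_filter.2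
          ⟨List.mem_toFinset.2 hq, hadj⟩, rfl⟩)
      · simp only [hadj, iff_false]
        exact hadjB _ (Finset.mem_image.2 ⟨q, Finset.mem_filter.2
          ⟨List.mem_toFinset.2 hq, hadj⟩, rfl⟩)
  rw [pickX, dif_pos h]
  exact h.choose_spec

noncomputable def bfList (G : SimpleGraph V) (e : ℕ → V) (u0 w0 : V) : ℕ → List (V × V)
  | 0 => [(u0, w0)]
  | n + 1 =>
    let l := bfList G e u0 w0 n
    if n % 2 = 0 then
      if ∀ q ∈ l, e (n / 2) ≠ q.1 then (e (n / 2), pickY G l (e (n / 2)) u0) :: l else l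
    else
      if ∀ q ∈ l, e (n / 2) ≠ q.2 then (pickX G l (e (n / 2)) u0, e (n / 2)) :: l else l

lemma bf_subset (G : SimpleGraph V) (e : ℕ → V) (u0 w0 : V) (n : ℕ) :
    ∀ q ∈ bfList G e u0 w0 n, q ∈ bfList G e u0 w0 (n + 1) := by
  intro q hq
  rw [bfList]
  split
  · split
    · exact List.mem_cons_of_mem _ hq
    · exact hq
  · split
    · exact List.mem_cons_of_mem _ hq
    · exact hq

lemma bf_mono (G : SimpleGraph V) (e : ℕ → V) (u0 w0 : V) {m n : ℕ} (h : m ≤ n) :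
    ∀ q ∈ bfList G e u0 w0 m, q ∈ bfList G e u0 w0 n := by
  induction n with
  | zero => intro q hq; rwa [Nat.le_zero.1 h] at hq
  | succ n ih =>
    rcases Nat.lt_succ_iff_lt_or_eq.1 (Nat.lt_succ_of_le h) with h' | rfl
    · intro q hq
      exact bf_subset G e u0 w0 n q (ih (by omega) q hq)
    · exact fun q hq => hq

lemma bf_inv {G : SimpleGraph V} (hext : ExtProp G) (e : ℕ → V) (u0 w0 : V) :
    ∀ n, (bfList G e u0 w0 n).Pairwise (BFR G) := by
  intro n
  induction n with
  | zero => simp [bfList]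
  | succ n ih =>
    rw [bfList]
    split
    · split
      · next h =>
        refine List.Pairwise.cons ?_ ih
        intro q hq
        have hs := pickY_spec hext ih (e (n / 2)) u0
        exact ⟨h q hq, hs.1 q hq, hs.2 q hq⟩
      · exact ih
    · split
      · next h =>
        refine List.Pairwise.cons ?_ ih
        intro q hq
        have hs := pickX_spec hext ih (e (n / 2)) u0
        exact ⟨hs.1 q hq, h q hq, hs.2 q hq⟩
      · exact ih
    
lemma bf_dom (G : SimpleGraph V) (e : ℕ → V) (u0 w0 : V) (m : ℕ) :
    ∃ q ∈ bfList G e u0 w0 (2 * m + 1), q.1 = e m := by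
  have h2 : (2 * m) % 2 = 0 := by omega
  have hd : (2 * m) / 2 = m := by omega
  rw [bfList]
  rw [if_pos h2, hd]
  split
  · exact ⟨_, List.mem_cons_self, rfl⟩
  · next h =>
    push_neg at h
    obtain ⟨q, hq, hqe⟩ := h
    exact ⟨q, hq, hqe.symm⟩

lemma bf_ran (G : SimpleGraph V) (e : ℕ → V) (u0 w0 : V) (m : ℕ) :
    ∃ q ∈ bfList G e u0 w0 (2 * m + 2), q.2 = e m := by
  have h2 : ¬ (2 * m + 1) % 2 = 0 := by omega
  have hd : (2 * m + 1) / 2 = m := by omega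
  rw [bfList]
  rw [if_neg h2, hd]
  split
  · exact ⟨_, List.mem_cons_self, rfl⟩
  · next h =>
    push_neg at h
    obtain ⟨q, hq, hqe⟩ := h
    exact ⟨q, hq, hqe.symm⟩

lemma exists_nontrivial_aut (G : SimpleGraph V) (hext : ExtProp G)
    [Countable V] [Infinite V] : ∃ φ : G ≃g G, ∃ v, φ v ≠ v := by
  obtain ⟨e, he⟩ := exists_surjective_nat V
  obtain ⟨u0, w0, hne⟩ := exists_pair_ne V
  have hinv := bf_inv hext e u0 w0
  set Φ : V → V → Prop := fun x y => ∃ n, (x, y) ∈ bfList G e u0 w0 n with hΦ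
  have hBFR : ∀ {a b a' b'}, Φ a b → Φ a' b' → (a, b) ≠ (a', b') → BFR G (a, b) (a', b') := by
    rintro a b a' b' ⟨n, hn⟩ ⟨n', hn'⟩ hneq
    have h1 := bf_mono G e u0 w0 (le_max_left n n') _ hn
    have h2 := bf_mono G e u0 w0 (le_max_right n n') _ hn'
    exact (haveI : Std.Symm (BFR G) := ⟨fun _ _ h => BFR_symm G h⟩; List.Pairwise.forall (hinv _)) h1 h2 hneq
  have hfun : ∀ {a b b'}, Φ a b → Φ a b' → b = b' := by
    intro a b b' h h'
    by_contra hbb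
    exact (hBFR h h' (fun hh => hbb (Prod.ext_iff.1 hh).2)).1 rfl
  have hinj : ∀ {a a' b}, Φ a b → Φ a' b → a = a' := by
    intro a a' b h h'
    by_contra haa
    exact (hBFR h h' (fun hh => haa (Prod.ext_iff.1 hh).1)).2.1 rfl
  have htot1 : ∀ a, ∃ b, Φ a b := by
    intro a
    obtain ⟨m, rfl⟩ := he a
    obtain ⟨q, hq, hq1⟩ := bf_dom G e u0 w0 m
    exact ⟨q.2, 2 * m + 1, by rw [← hq1]; exact hq⟩
  have htot2 : ∀ b, ∃ a, Φ a b := by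
    intro b
    obtain ⟨m, rfl⟩ := he b
    obtain ⟨q, hq, hq2⟩ := bf_ran G e u0 w0 m
    exact ⟨q.1, 2 * m + 2, by rw [← hq2]; exact hq⟩
  choose f hf using htot1
  choose g hg using htot2
  have hgf : ∀ a, g (f a) = a := fun a => hinj (hg (f a)) (hf a)
  have hfg : ∀ b, f (g b) = b := fun b => hfun (hf (g b)) (hg b)
  have hadj : ∀ a a', G.Adj (f a) (f a') ↔ G.Adj a a' := by
    intro a a'
    by_cases haa : a = a'
    · subst haa
      simp [G.irrefl]
    · have hb := hBFR (hf a) (hf a') (fun hh => haa (Prod.ext_iff.1 hh).1)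
      exact hb.2.2.symm
  refine ⟨⟨⟨f, g, hgf, hfg⟩, ?_⟩, u0, ?_⟩
  · intro a b
    exact hadj a b
  · have hw : Φ u0 w0 := ⟨0, by simp [bfList]⟩
    have hfu : f u0 = w0 := hfun (hf u0) hw
    show f u0 ≠ u0
    rw [hfu]
    exact hne.symm

end RadoAux

/-- The distinguishing number of the random graph is 2. -/
theorem distinguishingNumber_radoGraph {V : Type} (G : SimpleGraph V)
    (hG : IsRadoGraph G) : G.distinguishingNumber = 2 := by
  obtain ⟨hcount, hinf, hext⟩ := hG
  haveI := hcount
  haveI := hinf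
  set S : Set ℕ := {r : ℕ | ∃ c : V → Fin r, G.IsDistinguishing r c} with hS
  have h2 : 2 ∈ S := RadoAux.exists_distinguishing G hext
  have h0 : 0 ∉ S := by
    rintro ⟨c, -⟩
    obtain ⟨v⟩ := (inferInstance : Nonempty V)
    exact (c v).elim0
  have h1 : 1 ∉ S := by
    rintro ⟨c, hc⟩
    obtain ⟨φ, v, hφ⟩ := RadoAux.exists_nontrivial_aut G hext
    exact hφ (hc φ (fun w => Subsingleton.elim _ _) v)
  have hmem : sInf S ∈ S := Nat.sInf_mem ⟨2, h2⟩
  have hle : sInf S ≤ 2 := Nat.sInf_le h2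
  have hne0 : sInf S ≠ 0 := fun h => h0 (h ▸ hmem)
  have hne1 : sInf S ≠ 1 := fun h => h1 (h ▸ hmem)
  show sInf S = 2
  omega
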